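/- Let n ≥ 2 and let x ∈ {0,1}^n be not the all-one sequence. If y ∈ {0,1}^{n−1} is obtained from x by deleting a single symbol equal to 1 (and no substitution), then there exist distinct d, e ∈ {1,…,n} with x_d = 0 and x_e = 1 such that y = E(x, d, e); that is, y can also be obtained from x by deleting a 0 and substituting a 1 with a 0. -/

import Mathlib

/-- The bit of `x` at 1-based position `p` (junk value `0` out of range). -/
def getBit {n : ℕ} (x : Fin n → Fin 2) (p : ℕ) : Fin 2 :=
  if h : p - 1 < n then x ⟨p - 1, h⟩ else 0

/-- Hamming weight of a binary sequence. -/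
def wt {n : ℕ} (x : Fin n → Fin 2) : ℕ := ∑ i, (x i : ℕ)

/-- The `j`-th order VT syndrome `f_j(x) = Σ_{i=1}^n (Σ_{ℓ=1}^i ℓ^{j-1}) x_i`. -/
def vtSyn {n : ℕ} (j : ℕ) (x : Fin n → Fin 2) : ℕ :=
  ∑ i : Fin n, (∑ l ∈ Finset.Icc 1 ((i : ℕ) + 1), l ^ (j - 1)) * (x i : ℕ)

/-- Substitute the symbol at 1-based position `e` of `x` with its complement. -/
def substAt {n : ℕ} (x : Fin n → Fin 2) (e : ℕ) : Fin n → Fin 2 :=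
  fun i => if (i : ℕ) + 1 = e then 1 - x i else x i

/-- Delete the symbol at 1-based position `d` of `x`. -/
def delAt {n : ℕ} (x : Fin n → Fin 2) (d : ℕ) : Fin (n - 1) → Fin 2 :=
  fun i => if (i : ℕ) + 1 < d then getBit x ((i : ℕ) + 1) else getBit x ((i : ℕ) + 2)

/-- `E(x,d,e)`: delete the symbol at position `d` and substitute the symbol at
position `e` of `x` (positions are 1-based, taken in the original `x`). -/
def delSub {n : ℕ} (x : Fin n → Fin 2) (d e : ℕ) : Fin (n - 1) → Fin 2 :=
  delAt (substAt x e) d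

/-- The single-deletion single-substitution error ball `B_{1,1}(x)`. -/
def ball {n : ℕ} (x : Fin n → Fin 2) : Set (Fin (n - 1) → Fin 2) :=
  {y | (∃ d ∈ Finset.Icc 1 n, y = delAt x d) ∨
       ∃ d ∈ Finset.Icc 1 n, ∃ e ∈ Finset.Icc 1 n, d ≠ e ∧ y = delSub x d e}

/-- The code `C_n(c0,c1,c2)`. -/
def codeC (n : ℕ) (c0 c1 c2 : ℕ) : Finset (Fin n → Fin 2) :=
  Finset.univ.filter fun x =>
    x ≠ (fun _ => 0) ∧ x ≠ (fun _ => 1) ∧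
    wt x % 4 = c0 ∧ vtSyn 1 x % (2 * n) = c1 ∧ vtSyn 2 x % (2 * n ^ 2) = c2

/-- `u_i = Σ_{ℓ=i}^n x_ℓ − Σ_{ℓ=i}^n x'_ℓ` (1-based positions, value in `ℤ`). -/
def uSeq {n : ℕ} (x x' : Fin n → Fin 2) (i : ℕ) : ℤ :=
  (∑ l ∈ Finset.Icc i n, ((getBit x l : ℕ) : ℤ)) -
    ∑ l ∈ Finset.Icc i n, ((getBit x' l : ℕ) : ℤ)


lemma fin2_eq_one {a : Fin 2} (h : a ≠ 0) : a = 1 := by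
  have := a.isLt
  simp only [ne_eq, Fin.ext_iff, Fin.val_zero, Fin.val_one] at h ⊢
  omega

lemma fin2_eq_zero {a : Fin 2} (h : a ≠ 1) : a = 0 := by
  have := a.isLt
  simp only [ne_eq, Fin.ext_iff, Fin.val_zero, Fin.val_one] at h ⊢
  omega

lemma getBit_substAt {n : ℕ} (x : Fin n → Fin 2) (e q : ℕ) (h1 : 1 ≤ q) (h2 : q ≤ n) :
    getBit (substAt x e) q = if q = e then 1 - getBit x q else getBit x q := by
  have h : q - 1 < n := by omega
  have hq : q - 1 + 1 = q := by omega
  simp [getBit, substAt, h, hq]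

lemma exists_zero {n : ℕ} (x : Fin n → Fin 2) (h1 : x ≠ fun _ => 1) :
    ∃ q, 1 ≤ q ∧ q ≤ n ∧ getBit x q = 0 := by
  by_contra h
  push_neg at h
  apply h1
  funext k
  have hk : (k : ℕ) + 1 - 1 < n := by simpa using k.isLt
  have := h ((k : ℕ) + 1) (by omega) (by omega)
  apply fin2_eq_one
  simpa [getBit, hk] using this

/-- if `x` is not all-one and `y` is obtained from `x` by deleting
a `1`, then `y = E(x,d,e)` for some distinct `d, e` with `x_d = 0`, `x_e = 1`. -/
theorem stmt7 (n : ℕ) (hn : 2 ≤ n) (x : Fin n → Fin 2)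
    (h1 : x ≠ fun _ => 1)
    (d0 : ℕ) (hd0 : d0 ∈ Finset.Icc 1 n) (hx1 : getBit x d0 = 1)
    (y : Fin (n - 1) → Fin 2) (hy : y = delAt x d0) :
    ∃ d ∈ Finset.Icc 1 n, ∃ e ∈ Finset.Icc 1 n,
      d ≠ e ∧ getBit x d = 0 ∧ getBit x e = 1 ∧ y = delSub x d e := by
  simp only [Finset.mem_Icc] at hd0
  by_cases hA : ∃ p, 1 ≤ p ∧ p < d0 ∧ getBit x p = 0
  · -- there is a zero to the left of d0; take the rightmost one
    set S : Finset ℕ := (Finset.Icc 1 (d0 - 1)).filter (fun p => getBit x p = 0) with hS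
    have hSne : S.Nonempty := by
      obtain ⟨p, hp1, hp2, hp3⟩ := hA
      refine ⟨p, ?_⟩
      simp only [hS, Finset.mem_filter, Finset.mem_Icc]
      exact ⟨⟨hp1, by omega⟩, hp3⟩
    set d := S.max' hSne with hd
    have hdS : d ∈ S := S.max'_mem hSne
    have hmax : ∀ q ∈ S, q ≤ d := fun q hq => S.le_max' q hq
    simp only [hS, Finset.mem_filter, Finset.mem_Icc] at hdS
    obtain ⟨⟨hd1, hd2⟩, hd0val⟩ := hdS
    have hdlt : d < d0 := by omega
    have hones : ∀ q, d < q → q ≤ d0 → getBit x q = 1 := by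
      intro q hq1 hq2
      rcases eq_or_lt_of_le hq2 with rfl | hq2'
      · exact hx1
      · apply fin2_eq_one
        intro h0
        have hqS : q ∈ S := by
          simp only [hS, Finset.mem_filter, Finset.mem_Icc]
          exact ⟨⟨by omega, by omega⟩, h0⟩
        have := hmax q hqS; omega
    refine ⟨d, by simp only [Finset.mem_Icc]; omega, d + 1,
      by simp only [Finset.mem_Icc]; omega, by omega, hd0val,
      hones (d + 1) (by omega) (by omega), ?_⟩
    subst hy
    funext i
    have hi : (i : ℕ) < n - 1 := i.isLt
    simp only [delAt, delSub]
    rw [show ((i : ℕ) + 2) = (i : ℕ) + 1 + 1 from rfl,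
        getBit_substAt x (d + 1) ((i : ℕ) + 1) (by omega) (by omega),
        getBit_substAt x (d + 1) ((i : ℕ) + 1 + 1) (by omega) (by omega)]
    have hq1 : 1 ≤ (i : ℕ) + 1 := by omega
    have hq2 : (i : ℕ) + 1 ≤ n - 1 := by omega
    generalize hgen : (i : ℕ) + 1 = q at hq1 hq2 ⊢
    split_ifs <;>
      first
      | omega
      | rfl
      | (rw [hones q (by omega) (by omega), hones (q + 1) (by omega) (by omega)])
      | (rw [hones (q + 1) (by omega) (by omega), show q = d from by omega, hd0val]
         decide)
  · -- no zero to the left of d0; take the leftmost zero (it is right of d0)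
    push_neg at hA
    obtain ⟨q0, hq01, hq02, hq03⟩ := exists_zero x h1
    set S : Finset ℕ := (Finset.Icc (d0 + 1) n).filter (fun p => getBit x p = 0) with hS
    have hSne : S.Nonempty := by
      refine ⟨q0, ?_⟩
      simp only [hS, Finset.mem_filter, Finset.mem_Icc]
      have h1' : ¬ q0 < d0 := fun h => by
        have := hA q0 hq01 h; exact this hq03
      have h2' : q0 ≠ d0 := fun h => by rw [h, hx1] at hq03; exact absurd hq03 (by decide)
      exact ⟨⟨by omega, hq02⟩, hq03⟩
    set d := S.min' hSne with hd
    have hdS : d ∈ S := S.min'_mem hSne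
    have hmin : ∀ q ∈ S, d ≤ q := fun q hq => S.min'_le q hq
    simp only [hS, Finset.mem_filter, Finset.mem_Icc] at hdS
    obtain ⟨⟨hd1, hd2⟩, hd0val⟩ := hdS
    have hones : ∀ r, d0 ≤ r → r < d → getBit x r = 1 := by
      intro r hr1 hr2
      rcases eq_or_lt_of_le hr1 with rfl | hr1'
      · exact hx1
      · apply fin2_eq_one
        intro h0
        have hrS : r ∈ S := by
          simp only [hS, Finset.mem_filter, Finset.mem_Icc]
          exact ⟨⟨by omega, by omega⟩, h0⟩
        have := hmin r hrS; omega
    refine ⟨d, by simp only [Finset.mem_Icc]; omega, d - 1,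
      by simp only [Finset.mem_Icc]; omega, by omega, hd0val,
      hones (d - 1) (by omega) (by omega), ?_⟩
    subst hy
    funext i
    have hi : (i : ℕ) < n - 1 := i.isLt
    simp only [delAt, delSub]
    rw [show ((i : ℕ) + 2) = (i : ℕ) + 1 + 1 from rfl,
        getBit_substAt x (d - 1) ((i : ℕ) + 1) (by omega) (by omega),
        getBit_substAt x (d - 1) ((i : ℕ) + 1 + 1) (by omega) (by omega)]
    have hq1 : 1 ≤ (i : ℕ) + 1 := by omega
    have hq2 : (i : ℕ) + 1 ≤ n - 1 := by omega
    generalize hgen : (i : ℕ) + 1 = q at hq1 hq2 ⊢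
    split_ifs <;>
      first
      | omega
      | rfl
      | (rw [hones (q + 1) (by omega) (by omega), hones q (by omega) (by omega)])
      | (rw [hones q (by omega) (by omega), show q + 1 = d from by omega, hd0val]
         decide)
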